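/- Let t ≥ 3 and n ≥ 2t + 17 be integers, and let H be a 3-uniform hypergraph on n vertices with minimum degree δ₁(H) ≥ g(n,t) that contains no linear path of length t + 1. If P = (x₀, x₁, ..., x_{2t}) is a linear path of length t in H, then d_P(0, 2t) ≤ 1. -/
import Mathlib


/-- The degree of a vertex `v` in a hypergraph with edge set `E`:
the number of edges containing `v`. -/
def hdegree {V : Type*} [DecidableEq V] (E : Finset (Finset V)) (v : V) : ℕ :=
  (E.filter (fun e => v ∈ e)).card

/-- The hypergraph with edge set `E` contains a linear path of length `k`:
a collection of `k` (distinct) edges `e₁, …, e_k` such that `|eᵢ ∩ e_j| = 1`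
if `|i - j| = 1` and `eᵢ ∩ e_j = ∅` otherwise. -/
def HasLinearPath {V : Type*} [DecidableEq V] (E : Finset (Finset V)) (k : ℕ) : Prop :=
  ∃ f : Fin k → Finset V, Function.Injective f ∧ (∀ i, f i ∈ E) ∧
    ∀ i j : Fin k, i ≠ j →
      (((i : ℕ) + 1 = j ∨ (j : ℕ) + 1 = i) → (f i ∩ f j).card = 1) ∧
      (¬((i : ℕ) + 1 = j ∨ (j : ℕ) + 1 = i) → f i ∩ f j = ∅)

/-- `x = (x₀, x₁, …, x_{2t})` is a linear path of length `t` in the hypergraph with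
edge set `E`: the `2t+1` vertices are distinct and `{x_{2i}, x_{2i+1}, x_{2i+2}} ∈ E`
for each `i ∈ [0, t-1]`. -/
def IsLinearPathSeq {V : Type*} [DecidableEq V] (E : Finset (Finset V)) (t : ℕ)
    (x : Fin (2 * t + 1) → V) : Prop :=
  Function.Injective x ∧
  ∀ i : Fin t,
    ({x ⟨2 * i, by have := i.isLt; omega⟩,
      x ⟨2 * i + 1, by have := i.isLt; omega⟩,
      x ⟨2 * i + 2, by have := i.isLt; omega⟩} : Finset V) ∈ E

/-- `dP E x a b` is the number of vertices `y` outside the path `x` such that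
`{x_a, x_b, y}` is an edge; this is `d_P(a, b)` in the paper. -/
def dP {V : Type*} [Fintype V] [DecidableEq V] (E : Finset (Finset V)) {t : ℕ}
    (x : Fin (2 * t + 1) → V) (a b : Fin (2 * t + 1)) : ℕ :=
  (Finset.univ.filter
    (fun y => (∀ i, y ≠ x i) ∧ ({x a, x b, y} : Finset V) ∈ E)).card

/-- The function `g(n,t)` from the paper:
`g(n,t) = ((t-1)/2)n + (3/2)t² - (9/2)t + 6` for odd `t`, and
`g(n,t) = ((t-2)/2)n + (3/2)t² - (5/2)t + 6` for even `t`. -/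
def gQ (n t : ℕ) : ℚ :=
  if Odd t then ((t : ℚ) - 1) / 2 * n + 3 / 2 * t ^ 2 - 9 / 2 * t + 6
  else ((t : ℚ) - 2) / 2 * n + 3 / 2 * t ^ 2 - 5 / 2 * t + 6


section Aux

variable {V : Type*}

def cycV (t : ℕ) (x : Fin (2 * t + 1) → V) : ℕ → V :=
  fun k => x ⟨2 * (k % (t+1)), by have h := Nat.mod_lt k (by omega : 0 < t+1); omega⟩

def cycW (t : ℕ) (x : Fin (2 * t + 1) → V) (y : V) : ℕ → V :=
  fun k => if h : k % (t+1) = t then y else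
    x ⟨2 * (k % (t+1)) + 1, by have h2 := Nat.mod_lt k (by omega : 0 < t+1); omega⟩

lemma cycV_iff (t : ℕ) (x : Fin (2 * t + 1) → V) (hinj : Function.Injective x) :
    ∀ a b : ℕ, cycV t x a = cycV t x b ↔ a % (t+1) = b % (t+1) := by
  intro a b
  constructor
  · intro h
    have h2 : 2 * (a % (t+1)) = 2 * (b % (t+1)) := congrArg Fin.val (hinj h)
    omega
  · intro h
    simp only [cycV, h]

lemma cycW_iff (t : ℕ) (x : Fin (2 * t + 1) → V) (y : V)
    (hinj : Function.Injective x) (hy : ∀ i, y ≠ x i) :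
    ∀ a b : ℕ, cycW t x y a = cycW t x y b ↔ a % (t+1) = b % (t+1) := by
  intro a b
  constructor
  · intro h
    unfold cycW at h
    split_ifs at h with h1 h2 h2
    · omega
    · exact absurd h (hy _)
    · exact absurd h.symm (hy _)
    · have h3 : 2 * (a % (t+1)) + 1 = 2 * (b % (t+1)) + 1 := congrArg Fin.val (hinj h)
      omega
  · intro h
    simp only [cycW, h]

lemma cycVW_ne (t : ℕ) (x : Fin (2 * t + 1) → V) (y : V)
    (hinj : Function.Injective x) (hy : ∀ i, y ≠ x i) :
    ∀ a b : ℕ, cycV t x a ≠ cycW t x y b := by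
  intro a b h
  unfold cycV cycW at h
  split_ifs at h with h1
  · exact (hy _) h.symm
  · have h3 : 2 * (a % (t+1)) = 2 * (b % (t+1)) + 1 := congrArg Fin.val (hinj h)
    omega

lemma cyc_edge [DecidableEq V] (E : Finset (Finset V)) (t : ℕ) (ht : 3 ≤ t)
    (x : Fin (2 * t + 1) → V) (hx : IsLinearPathSeq E t x) (y : V)
    (hfy : ({x ⟨0, by omega⟩, x ⟨2 * t, by omega⟩, y} : Finset V) ∈ E) :
    ∀ k : ℕ, ({cycV t x k, cycW t x y k, cycV t x (k+1)} : Finset V) ∈ E := by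
  intro k
  have hklt : k % (t+1) < t + 1 := Nat.mod_lt k (by omega)
  by_cases h : k % (t+1) = t
  · have h1 : (k+1) % (t+1) = 0 := by
      rw [Nat.add_mod, h]
      simp [Nat.mod_eq_of_lt (by omega : 1 < t+1)]
    have e1 : cycV t x k = x ⟨2 * t, by omega⟩ := by
      simp only [cycV, h]
    have e2 : cycW t x y k = y := by
      simp only [cycW, h, dif_pos]
    have e3 : cycV t x (k+1) = x ⟨0, by omega⟩ := by
      simp only [cycV, h1, Nat.mul_zero]
    rw [e1, e2, e3]
    have : ({x ⟨2 * t, by omega⟩, y, x ⟨0, by omega⟩} : Finset V)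
        = ({x ⟨0, by omega⟩, x ⟨2 * t, by omega⟩, y} : Finset V) := by
      ext c; simp only [Finset.mem_insert, Finset.mem_singleton]; tauto
    rw [this]
    exact hfy
  · have hlt : k % (t+1) < t := by omega
    have h1 : (k+1) % (t+1) = k % (t+1) + 1 := by
      rw [Nat.add_mod, Nat.mod_eq_of_lt (by omega : 1 < t+1),
        Nat.mod_eq_of_lt (by omega : k % (t+1) + 1 < t+1)]
    have e1 : cycW t x y k = x ⟨2 * (k % (t+1)) + 1, by omega⟩ := by
      simp only [cycW, dif_neg h]
    have e3 : cycV t x (k+1) = x ⟨2 * (k % (t+1)) + 2, by omega⟩ := by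
      unfold cycV
      congr 1
      apply Fin.ext
      show 2 * ((k+1) % (t+1)) = 2 * (k % (t+1)) + 2
      omega
    have e0 : cycV t x k = x ⟨2 * (k % (t+1)), by omega⟩ := rfl
    rw [e0, e1, e3]
    exact hx.2 ⟨k % (t+1), hlt⟩

lemma cyc_notMem [DecidableEq V] (t : ℕ) (x : Fin (2 * t + 1) → V) (y z : V)
    (hzx : ∀ j, z ≠ x j) (hzy : z ≠ y) :
    ∀ a : ℕ, z ∉ ({cycV t x a, cycW t x y a, cycV t x (a+1)} : Finset V) := by
  intro a hmem
  rcases Finset.mem_insert.mp hmem with h | hmem2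
  · exact hzx _ h
  rcases Finset.mem_insert.mp hmem2 with h | h
  · unfold cycW at h
    split_ifs at h with h1
    · exact hzy h
    · exact hzx _ h
  · exact hzx _ (Finset.mem_singleton.mp h)

lemma cyc_notMem_x [DecidableEq V] (t : ℕ) (x : Fin (2 * t + 1) → V) (y z : V)
    (hzx : ∀ j, z ≠ x j) :
    ∀ a : ℕ, a % (t+1) ≠ t → z ∉ ({cycV t x a, cycW t x y a, cycV t x (a+1)} : Finset V) := by
  intro a ha hmem
  rcases Finset.mem_insert.mp hmem with h | hmem2
  · exact hzx _ h
  rcases Finset.mem_insert.mp hmem2 with h | h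
  · rw [cycW, dif_neg ha] at h
    exact hzx _ h
  · exact hzx _ (Finset.mem_singleton.mp h)

lemma cycle_extend [DecidableEq V] (E : Finset (Finset V)) (m : ℕ) (hm : 4 ≤ m)
    (v w : ℕ → V)
    (hv : ∀ a b : ℕ, v a = v b ↔ a % m = b % m)
    (hw : ∀ a b : ℕ, w a = w b ↔ a % m = b % m)
    (hvw : ∀ a b : ℕ, v a ≠ w b)
    (hedge : ∀ k : ℕ, ({v k, w k, v (k+1)} : Finset V) ∈ E)
    (u z1 z2 : V) (i : ℕ)
    (hu : u = v i ∨ u = w i)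
    (hz1 : ∀ k : ℕ, k ≤ m - 2 → z1 ∉ ({v (i+k), w (i+k), v (i+k+1)} : Finset V))
    (hz2 : ∀ k : ℕ, k ≤ m - 2 → z2 ∉ ({v (i+k), w (i+k), v (i+k+1)} : Finset V))
    (hg : ({u, z1, z2} : Finset V) ∈ E) :
    HasLinearPath E m := by
  set cE : ℕ → Finset V := fun a => ({v a, w a, v (a+1)} : Finset V) with hcE
  set g : Finset V := ({u, z1, z2} : Finset V) with hgdef
  -- basic mod helpers
  have hcan : ∀ a b : ℕ, (i+a) % m = (i+b) % m ↔ a % m = b % m := by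
    intro a b
    constructor
    · exact fun h => Nat.ModEq.add_left_cancel' i h
    · exact fun h => Nat.ModEq.add_left i h
  have key : ∀ a b : ℕ, 1 ≤ b → b < m → a % m ≠ (a + b) % m := by
    intro a b hb1 hbm h
    have h0 : (a + 0) % m = (a + b) % m := by simpa using h
    have h2 : 0 % m = b % m := Nat.ModEq.add_left_cancel' a h0
    rw [Nat.zero_mod, Nat.mod_eq_of_lt hbm] at h2
    omega
  -- membership characterizations
  have hmemv : ∀ a b : ℕ, v a ∈ cE b ↔ (a % m = b % m ∨ a % m = (b+1) % m) := by
    intro a b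
    simp only [hcE, Finset.mem_insert, Finset.mem_singleton]
    constructor
    · rintro (h | h | h)
      · exact Or.inl ((hv a b).mp h)
      · exact absurd h (hvw a b)
      · exact Or.inr ((hv a (b+1)).mp h)
    · rintro (h | h)
      · exact Or.inl ((hv a b).mpr h)
      · exact Or.inr (Or.inr ((hv a (b+1)).mpr h))
  have hmemw : ∀ a b : ℕ, w a ∈ cE b ↔ a % m = b % m := by
    intro a b
    simp only [hcE, Finset.mem_insert, Finset.mem_singleton]
    constructor
    · rintro (h | h | h)
      · exact absurd h.symm (hvw b a)
      · exact (hw a b).mp h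
      · exact absurd h.symm (hvw (b+1) a)
    · exact fun h => Or.inr (Or.inl ((hw a b).mpr h))
  have hcmem : ∀ (c : V) (a : ℕ), c ∈ cE a → c = v a ∨ c = w a ∨ c = v (a+1) := by
    intro c a hc
    simpa [hcE, Finset.mem_insert, Finset.mem_singleton] using hc
  -- disjointness of far cycle edges
  have hdisj : ∀ a b : ℕ, a % m ≠ b % m → (a+1) % m ≠ b % m → a % m ≠ (b+1) % m →
      cE a ∩ cE b = ∅ := by
    intro a b h1 h2 h3
    rw [Finset.eq_empty_iff_forall_notMem]
    intro c hc
    rw [Finset.mem_inter] at hc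
    obtain ⟨hca, hcb⟩ := hc
    rcases hcmem c a hca with rfl | rfl | rfl
    · rcases (hmemv a b).mp hcb with h | h
      · exact h1 h
      · exact h3 h
    · exact h1 ((hmemw a b).mp hcb)
    · rcases (hmemv (a+1) b).mp hcb with h | h
      · exact h2 h
      · exact h1 (Nat.ModEq.add_right_cancel' 1 h)
  -- adjacent cycle edges intersect exactly in the connector
  have hadj : ∀ a : ℕ, cE a ∩ cE (a+1) = {v (a+1)} := by
    intro a
    ext c
    rw [Finset.mem_inter, Finset.mem_singleton]
    constructor
    · rintro ⟨h1, h2⟩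
      rcases hcmem c a h1 with rfl | rfl | rfl
      · rcases (hmemv a (a+1)).mp h2 with h | h
        · exact absurd h (key a 1 le_rfl (by omega))
        · exact absurd h (by have := key a 2 (by omega) (by omega); simpa [Nat.add_assoc] using this)
      · exact absurd ((hmemw a (a+1)).mp h2) (key a 1 le_rfl (by omega))
      · rfl
    · rintro rfl
      refine ⟨?_, ?_⟩ <;> simp [hcE]
  -- u is only in cE i (among the window)
  have hu_mem : u ∈ cE i := by
    rcases hu with rfl | rfl <;> simp [hcE]
  have hu_not : ∀ k : ℕ, 1 ≤ k → k ≤ m - 2 → u ∉ cE (i + k) := by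
    intro k hk1 hk2 hmem
    rcases hu with rfl | rfl
    · rcases (hmemv i (i+k)).mp hmem with h | h
      · have : 0 % m = k % m := (hcan 0 k).mp (by simpa using h)
        rw [Nat.zero_mod, Nat.mod_eq_of_lt (by omega)] at this
        omega
      · have : 0 % m = (k+1) % m := (hcan 0 (k+1)).mp (by simpa [Nat.add_assoc] using h)
        rw [Nat.zero_mod, Nat.mod_eq_of_lt (by omega)] at this
        omega
    · have h := (hmemw i (i+k)).mp hmem
      have : 0 % m = k % m := (hcan 0 k).mp (by simpa using h)
      rw [Nat.zero_mod, Nat.mod_eq_of_lt (by omega)] at this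
      omega
  -- g facts
  have hgi : g ∩ cE i = {u} := by
    ext c
    rw [Finset.mem_inter, Finset.mem_singleton]
    constructor
    · rintro ⟨h1, h2⟩
      rcases by simpa [hgdef, Finset.mem_insert, Finset.mem_singleton] using h1 with rfl | rfl | rfl
      · rfl
      · exact absurd h2 (by have := hz1 0 (by omega); simpa [hcE] using this)
      · exact absurd h2 (by have := hz2 0 (by omega); simpa [hcE] using this)
    · rintro rfl
      exact ⟨by simp [hgdef], hu_mem⟩
  have hgfar : ∀ k : ℕ, 1 ≤ k → k ≤ m - 2 → g ∩ cE (i + k) = ∅ := by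
    intro k hk1 hk2
    rw [Finset.eq_empty_iff_forall_notMem]
    intro c hc
    rw [Finset.mem_inter] at hc
    obtain ⟨h1, h2⟩ := hc
    rcases by simpa [hgdef, Finset.mem_insert, Finset.mem_singleton] using h1 with rfl | rfl | rfl
    · exact hu_not k hk1 hk2 h2
    · exact (hz1 k hk2) (by simpa [hcE] using h2)
    · exact (hz2 k hk2) (by simpa [hcE] using h2)
  -- window facts
  have hwin_ne : ∀ a b : ℕ, a ≤ m - 2 → b ≤ m - 2 → a ≠ b → cE (i+a) ≠ cE (i+b) := by
    intro a b ha hb hab heq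
    have : w (i+a) ∈ cE (i+b) := by rw [← heq]; simp [hcE]
    have h := (hmemw (i+a) (i+b)).mp this
    have h2 : a % m = b % m := (hcan a b).mp h
    rw [Nat.mod_eq_of_lt (by omega), Nat.mod_eq_of_lt (by omega)] at h2
    exact hab h2
  have hgne : ∀ k : ℕ, k ≤ m - 2 → g ≠ cE (i + k) := by
    intro k hk heq
    have : z1 ∈ cE (i+k) := by rw [← heq]; simp [hgdef]
    exact (hz1 k hk) (by simpa [hcE] using this)
  have hwin_disj : ∀ a b : ℕ, a ≤ m - 2 → b ≤ m - 2 → a + 2 ≤ b ∨ b + 2 ≤ a →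
      cE (i+a) ∩ cE (i+b) = ∅ := by
    intro a b ha hb hfar
    apply hdisj
    · intro h
      have h2 : a % m = b % m := (hcan a b).mp h
      rw [Nat.mod_eq_of_lt (by omega), Nat.mod_eq_of_lt (by omega)] at h2
      omega
    · intro h
      have h2 : (a+1) % m = b % m := (hcan (a+1) b).mp (by simpa [Nat.add_assoc] using h)
      rw [Nat.mod_eq_of_lt (by omega), Nat.mod_eq_of_lt (by omega)] at h2
      omega
    · intro h
      have h2 : a % m = (b+1) % m := (hcan a (b+1)).mp (by simpa [Nat.add_assoc] using h)
      rw [Nat.mod_eq_of_lt (by omega), Nat.mod_eq_of_lt (by omega)] at h2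
      omega
  -- the path
  refine ⟨fun k => if (k : ℕ) = 0 then g else cE (i + ((k : ℕ) - 1)), ?_, ?_, ?_⟩
  · intro a b hab
    dsimp only at hab
    by_cases ha : (a : ℕ) = 0 <;> by_cases hb : (b : ℕ) = 0
    · exact Fin.ext (by omega)
    · rw [if_pos ha, if_neg hb] at hab
      exact absurd hab (hgne _ (by have := b.isLt; omega))
    · rw [if_neg ha, if_pos hb] at hab
      exact absurd hab.symm (hgne _ (by have := a.isLt; omega))
    · rw [if_neg ha, if_neg hb] at hab
      have := hwin_ne ((a:ℕ)-1) ((b:ℕ)-1) (by have := a.isLt; omega) (by have := b.isLt; omega)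
      by_cases h : (a:ℕ) - 1 = (b:ℕ) - 1
      · exact Fin.ext (by omega)
      · exact absurd hab (this h)
  · intro k
    dsimp only
    by_cases hk : (k : ℕ) = 0
    · rw [if_pos hk]; exact hg
    · rw [if_neg hk]; exact hedge _
  · intro a b hab
    dsimp only
    by_cases ha : (a : ℕ) = 0 <;> by_cases hb : (b : ℕ) = 0
    · exact absurd (Fin.ext (by omega : (a:ℕ) = (b:ℕ))) hab
    · rw [if_pos ha, if_neg hb]
      constructor
      · intro hadj'
        have hb1 : (b : ℕ) = 1 := by omega
        have : i + ((b:ℕ) - 1) = i := by omega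
        rw [this, hgi]
        exact Finset.card_singleton u
      · intro hnadj
        have hb2 : 2 ≤ (b : ℕ) := by omega
        exact hgfar _ (by omega) (by have := b.isLt; omega)
    · rw [if_neg ha, if_pos hb, Finset.inter_comm]
      constructor
      · intro hadj'
        have ha1 : (a : ℕ) = 1 := by omega
        have : i + ((a:ℕ) - 1) = i := by omega
        rw [this, hgi]
        exact Finset.card_singleton u
      · intro hnadj
        have ha2 : 2 ≤ (a : ℕ) := by omega
        exact hgfar _ (by omega) (by have := a.isLt; omega)
    · rw [if_neg ha, if_neg hb]
      have hka := a.isLt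
      have hkb := b.isLt
      constructor
      · rintro (h | h)
        · have : i + ((b:ℕ) - 1) = (i + ((a:ℕ) - 1)) + 1 := by omega
          rw [this, hadj]
          exact Finset.card_singleton _
        · have : i + ((a:ℕ) - 1) = (i + ((b:ℕ) - 1)) + 1 := by omega
          rw [Finset.inter_comm, this, hadj]
          exact Finset.card_singleton _
      · intro hnadj
        have hab' : (a : ℕ) ≠ (b : ℕ) := fun h => hab (Fin.ext h)
        apply hwin_disj _ _ (by omega) (by omega)
        omega

lemma forbidden [DecidableEq V] (E : Finset (Finset V)) (t : ℕ) (ht : 3 ≤ t)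
    (hfree : ¬ HasLinearPath E (t + 1))
    (x : Fin (2 * t + 1) → V) (hx : IsLinearPathSeq E t x) (y : V) (hy : ∀ i, y ≠ x i)
    (hfy : ({x ⟨0, by omega⟩, x ⟨2 * t, by omega⟩, y} : Finset V) ∈ E)
    (u z1 z2 : V) (i : ℕ)
    (hui : u = cycV t x i ∨ u = cycW t x y i)
    (hz1 : ∀ k : ℕ, k ≤ t - 1 →
      z1 ∉ ({cycV t x (i+k), cycW t x y (i+k), cycV t x (i+k+1)} : Finset V))
    (hz2 : ∀ k : ℕ, k ≤ t - 1 →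
      z2 ∉ ({cycV t x (i+k), cycW t x y (i+k), cycV t x (i+k+1)} : Finset V))
    (hg : ({u, z1, z2} : Finset V) ∈ E) : False := by
  apply hfree
  exact cycle_extend E (t+1) (by omega) (cycV t x) (cycW t x y)
    (cycV_iff t x hx.1) (cycW_iff t x y hx.1 hy) (cycVW_ne t x y hx.1 hy)
    (cyc_edge E t ht x hx y hfy) u z1 z2 i hui
    (fun k hk => hz1 k (by omega)) (fun k hk => hz2 k (by omega)) hg

end Aux

set_option maxHeartbeats 2000000 in
theorem dP_endpoints_le_one
    (t n : ℕ) (ht : t ≥ 3) (hn : n ≥ 2 * t + 17)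
    (V : Type*) [Fintype V] [DecidableEq V] (hV : Fintype.card V = n)
    (E : Finset (Finset V)) (hE : ∀ e ∈ E, e.card = 3)
    (hdeg : ∀ v : V, gQ n t ≤ (hdegree E v : ℚ))
    (hfree : ¬ HasLinearPath E (t + 1))
    (x : Fin (2 * t + 1) → V) (hx : IsLinearPathSeq E t x) :
    dP E x ⟨0, by omega⟩ ⟨2 * t, by omega⟩ ≤ 1 := by
  by_contra hcon
  push_neg at hcon
  rw [dP] at hcon
  obtain ⟨y₁, hy₁m, y₂, hy₂m, hne⟩ := Finset.one_lt_card.mp hcon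
  rw [Finset.mem_filter] at hy₁m hy₂m
  obtain ⟨-, hy₁x, hf₁⟩ := hy₁m
  obtain ⟨-, hy₂x, hf₂⟩ := hy₂m
  have hinj := hx.1
  -- Forbidden configuration A : an edge {y, z1, z2} with z1, z2 off the path and ≠ y
  have hA : ∀ y : V, (∀ i, y ≠ x i) →
      ({x ⟨0, by omega⟩, x ⟨2 * t, by omega⟩, y} : Finset V) ∈ E →
      ∀ z1 z2 : V, (∀ j, z1 ≠ x j) → z1 ≠ y → (∀ j, z2 ≠ x j) → z2 ≠ y →
      ({y, z1, z2} : Finset V) ∈ E → False := by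
    intro y hy hfy z1 z2 h1x h1y h2x h2y hg
    refine forbidden E t ht hfree x hx y hy hfy y z1 z2 t ?_ ?_ ?_ hg
    · right
      rw [cycW, dif_pos (Nat.mod_eq_of_lt (by omega : t < t + 1))]
    · exact fun k _ => cyc_notMem t x y z1 h1x h1y _
    · exact fun k _ => cyc_notMem t x y z2 h2x h2y _
  -- Forbidden configuration B : an edge {x j, z1, z2} with z1, z2 off the path, ≠ y₂
  have hB : ∀ (j : Fin (2 * t + 1)) (z1 z2 : V),
      (∀ j', z1 ≠ x j') → z1 ≠ y₂ → (∀ j', z2 ≠ x j') → z2 ≠ y₂ →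
      ({x j, z1, z2} : Finset V) ∈ E → False := by
    intro j z1 z2 h1x h1y h2x h2y hg
    have hu : ∃ i : ℕ, x j = cycV t x i ∨ x j = cycW t x y₂ i := by
      rcases Nat.even_or_odd (j : ℕ) with ⟨p, hp⟩ | ⟨p, hp⟩
      · refine ⟨p, Or.inl ?_⟩
        have hple : p ≤ t := by have := j.isLt; omega
        have : cycV t x p = x ⟨2 * p, by omega⟩ := by
          simp only [cycV, Nat.mod_eq_of_lt (by omega : p < t + 1)]
        rw [this]
        exact congrArg x (Fin.ext (by simp; omega))
      · refine ⟨p, Or.inr ?_⟩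
        have hplt : p < t := by have := j.isLt; omega
        have hmod : p % (t+1) = p := Nat.mod_eq_of_lt (by omega)
        have : cycW t x y₂ p = x ⟨2 * p + 1, by omega⟩ := by
          rw [cycW, dif_neg (by omega : ¬ p % (t+1) = t)]
          exact congrArg x (Fin.ext (by simp [hmod]))
        rw [this]
        exact congrArg x (Fin.ext (by simp; omega))
    obtain ⟨i, hui⟩ := hu
    refine forbidden E t ht hfree x hx y₂ hy₂x hf₂ (x j) z1 z2 i hui ?_ ?_ hg
    · exact fun k _ => cyc_notMem t x y₂ z1 h1x h1y _
    · exact fun k _ => cyc_notMem t x y₂ z2 h2x h2y _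
  -- Forbidden configuration C : the edge {x 1, y₁, y₂}
  have hC : ({x ⟨1, by omega⟩, y₁, y₂} : Finset V) ∈ E → False := by
    intro hg
    refine forbidden E t ht hfree x hx y₂ hy₂x hf₂ (x ⟨1, by omega⟩) y₁ y₂ 0 ?_ ?_ ?_ hg
    · right
      have h0 : ¬ (0 % (t+1) = t) := by rw [Nat.zero_mod]; omega
      rw [cycW, dif_neg h0]
      exact (congrArg x (Fin.ext (by show 2 * (0 % (t+1)) + 1 = 1; rw [Nat.zero_mod]))).symm
    · exact fun k _ => cyc_notMem t x y₂ y₁ hy₁x hne _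
    · intro k hk
      exact cyc_notMem_x t x y₂ y₂ hy₂x (0 + k)
        (by rw [Nat.zero_add, Nat.mod_eq_of_lt (by omega : k < t + 1)]; omega)
  -- Counting
  classical
  set Pset : Finset V := Finset.univ.image x with hPset
  have hy₂P : y₂ ∉ Pset := by
    simp only [hPset, Finset.mem_image]
    rintro ⟨j, -, hj⟩
    exact hy₂x j hj.symm
  set Q : Finset V := insert y₂ Pset with hQ
  have hQcard : Q.card = 2 * t + 2 := by
    rw [hQ, Finset.card_insert_of_notMem hy₂P, hPset,
      Finset.card_image_of_injective _ hinj, Finset.card_univ, Fintype.card_fin]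
  set pr : Finset V := ({x ⟨1, by omega⟩, y₂} : Finset V) with hpr
  have hx1Q : x ⟨1, by omega⟩ ∈ Q := by
    rw [hQ]
    exact Finset.mem_insert_of_mem (Finset.mem_image.mpr ⟨_, Finset.mem_univ _, rfl⟩)
  have hx1y₂ : x ⟨1, by omega⟩ ≠ y₂ := fun h => hy₂x _ h.symm
  have hprQ : pr ∈ Q.powersetCard 2 := by
    rw [Finset.mem_powersetCard]
    constructor
    · rw [hpr]
      exact Finset.insert_subset hx1Q (Finset.singleton_subset_iff.mpr
        (by rw [hQ]; exact Finset.mem_insert_self _ _))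
    · exact Finset.card_pair hx1y₂
  have hmapsto : ∀ e ∈ E.filter (fun e => y₁ ∈ e),
      e.erase y₁ ∈ (Q.powersetCard 2).erase pr := by
    intro e he
    rw [Finset.mem_filter] at he
    obtain ⟨heE, hy₁e⟩ := he
    have hcard3 := hE e heE
    have hc2 : (e.erase y₁).card = 2 := by
      rw [Finset.card_erase_of_mem hy₁e, hcard3]
    obtain ⟨a, b, hab, habe⟩ := Finset.card_eq_two.mp hc2
    have hmema : a ∈ e.erase y₁ := by rw [habe]; exact Finset.mem_insert_self _ _
    have hmemb : b ∈ e.erase y₁ := by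
      rw [habe]; exact Finset.mem_insert_of_mem (Finset.mem_singleton_self _)
    have hay : a ≠ y₁ := Finset.ne_of_mem_erase hmema
    have hby : b ≠ y₁ := Finset.ne_of_mem_erase hmemb
    have he_eq : e = ({y₁, a, b} : Finset V) := by
      rw [← Finset.insert_erase hy₁e, habe]
    -- every element of e other than y₁ lies in Q
    have hQmem : ∀ c d : V, e = ({y₁, c, d} : Finset V) → c ≠ y₁ → d ≠ y₁ → c ∈ Q := by
      intro c d hecd hcy hdy
      by_contra hcQ
      have hcx : ∀ j, c ≠ x j := by
        intro j hj
        apply hcQ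
        rw [hQ]
        exact Finset.mem_insert_of_mem (Finset.mem_image.mpr ⟨j, Finset.mem_univ _, hj.symm⟩)
      have hcy₂ : c ≠ y₂ := by
        intro h
        apply hcQ
        rw [hQ, h]
        exact Finset.mem_insert_self _ _
      by_cases hdP : ∃ j, d = x j
      · obtain ⟨j, rfl⟩ := hdP
        apply hB j y₁ c hy₁x hne hcx hcy₂
        have : ({x j, y₁, c} : Finset V) = e := by
          rw [hecd]; ext z
          simp only [Finset.mem_insert, Finset.mem_singleton]; tauto
        rw [this]; exact heE
      · push_neg at hdP
        exact hA y₁ hy₁x hf₁ c d hcx hcy hdP hdy (hecd ▸ heE)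
    have haQ : a ∈ Q := hQmem a b he_eq hay hby
    have hbQ : b ∈ Q := hQmem b a
      (by rw [he_eq]; ext z; simp only [Finset.mem_insert, Finset.mem_singleton]; tauto)
      hby hay
    rw [Finset.mem_erase]
    constructor
    · intro heq
      apply hC
      have : ({x ⟨1, by omega⟩, y₁, y₂} : Finset V) = e := by
        rw [← Finset.insert_erase hy₁e, heq, hpr]
        ext z; simp only [Finset.mem_insert, Finset.mem_singleton]; tauto
      rw [this]; exact heE
    · rw [Finset.mem_powersetCard]
      refine ⟨?_, hc2⟩
      rw [habe]
      exact Finset.insert_subset haQ (Finset.singleton_subset_iff.mpr hbQ)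
  have hinjOn : Set.InjOn (fun e : Finset V => e.erase y₁) ↑(E.filter (fun e => y₁ ∈ e)) := by
    intro e₁ h₁ e₂ h₂ h
    rw [Finset.coe_filter, Set.mem_setOf_eq] at h₁ h₂
    rw [← Finset.insert_erase h₁.2, ← Finset.insert_erase h₂.2]
    simp only at h
    rw [h]
  have hdb : hdegree E y₁ ≤ 2 * t * t + 3 * t := by
    have h1 : (E.filter (fun e => y₁ ∈ e)).card ≤ ((Q.powersetCard 2).erase pr).card :=
      Finset.card_le_card_of_injOn _ hmapsto hinjOn
    have h2 : ((Q.powersetCard 2).erase pr).card = (Q.powersetCard 2).card - 1 :=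
      Finset.card_erase_of_mem hprQ
    have h3 : (Q.powersetCard 2).card = 2 * t * t + 3 * t + 1 := by
      rw [Finset.card_powersetCard, hQcard, Nat.choose_two_right]
      have e1 : 2 * t + 2 - 1 = 2 * t + 1 := by omega
      rw [e1]
      have e2 : (2 * t + 2) * (2 * t + 1) = (2 * t * t + 3 * t + 1) * 2 := by ring
      rw [e2, Nat.mul_div_cancel _ (by norm_num : 0 < 2)]
    rw [hdegree]
    omega
  have hfinal : gQ n t ≤ ((2 * t * t + 3 * t : ℕ) : ℚ) :=
    le_trans (hdeg y₁) (by exact_mod_cast hdb)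
  have hnQ : (2 * (t : ℚ) + 17) ≤ (n : ℚ) := by exact_mod_cast hn
  have htQ : (3 : ℚ) ≤ (t : ℚ) := by exact_mod_cast ht
  rw [gQ] at hfinal
  push_cast at hfinal
  split_ifs at hfinal with hodd
  · nlinarith [mul_nonneg (by linarith : (0:ℚ) ≤ (t:ℚ) - 1)
      (by linarith : (0:ℚ) ≤ (n:ℚ) - (2 * (t:ℚ) + 17)),
      mul_le_mul htQ htQ (by norm_num) (by linarith : (0:ℚ) ≤ (t:ℚ))]
  · have ht4 : (4 : ℚ) ≤ (t : ℚ) := by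
      have h4 : 4 ≤ t := by
        rcases Nat.even_or_odd t with he | ho
        · obtain ⟨k, hk⟩ := he; omega
        · exact absurd ho hodd
      exact_mod_cast h4
    nlinarith [mul_nonneg (by linarith : (0:ℚ) ≤ (t:ℚ) - 2)
      (by linarith : (0:ℚ) ≤ (n:ℚ) - (2 * (t:ℚ) + 17)),
      mul_le_mul ht4 ht4 (by norm_num) (by linarith : (0:ℚ) ≤ (t:ℚ))]
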